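/- Let S be a compact topological ternary semigroup and ρ a closed congruence on S. Then S/ρ, with the induced ternary multiplication (aρ)(bρ)(cρ) = (abc)ρ and the quotient topology, is a compact topological ternary semigroup: S/ρ is compact, Hausdorff, and the induced ternary multiplication is continuous. -/

import Mathlib

/-- Let `S` be a compact topological ternary semigroup and `s` a closed
congruence on `S`.  Then `S/s` with the induced ternary multiplication and the quotient
topology is a compact topological ternary semigroup: it is compact, Hausdorff, and the
induced ternary multiplication is continuous. -/
theorem quotient_compact_topological_ternary_semigroup {S : Type*}
    [TopologicalSpace S] [T2Space S] [CompactSpace S] (m : S → S → S → S)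
    (hassoc : ∀ a b c d e : S, m (m a b c) d e = m a (m b c d) e ∧
      m a (m b c d) e = m a b (m c d e))
    (hm : Continuous fun p : S × S × S => m p.1 p.2.1 p.2.2)
    (s : Setoid S)
    (hcong : ∀ a b c d e f : S, s.r a b → s.r c d → s.r e f → s.r (m a c e) (m b d f))
    (hclosed : IsClosed {p : S × S | s.r p.1 p.2})
    (g : Quotient s → Quotient s → Quotient s → Quotient s)
    (hg : ∀ a b c : S, g (Quotient.mk s a) (Quotient.mk s b) (Quotient.mk s c)
      = Quotient.mk s (m a b c)) :
    CompactSpace (Quotient s) ∧ T2Space (Quotient s) ∧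
      Continuous fun p : Quotient s × Quotient s × Quotient s => g p.1 p.2.1 p.2.2 := by
  have hπ : Continuous (Quotient.mk s) := continuous_quotient_mk'
  -- saturation of a closed set is closed
  have hsat : ∀ C : Set S, IsClosed C →
      IsClosed (Quotient.mk s ⁻¹' (Quotient.mk s '' C)) := by
    intro C hC
    have : Quotient.mk s ⁻¹' (Quotient.mk s '' C) =
        Prod.snd '' ({p : S × S | s.r p.1 p.2} ∩ C ×ˢ Set.univ) := by
      ext y
      simp only [Set.mem_preimage, Set.mem_image, Set.mem_inter_iff, Set.mem_setOf_eq,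
        Set.mem_prod, Set.mem_univ, and_true, Prod.exists]
      constructor
      · rintro ⟨x, hx, hxy⟩
        exact ⟨x, y, ⟨Quotient.exact hxy, hx⟩, rfl⟩
      · rintro ⟨x, y', ⟨hr, hx⟩, rfl⟩
        exact ⟨x, hx, Quotient.sound hr⟩
    rw [this]
    exact (((hclosed.inter (hC.prod isClosed_univ)).isCompact).image continuous_snd).isClosed
  -- the quotient map is a closed map
  have hclosedmap : IsClosedMap (Quotient.mk s) := by
    intro C hC
    rw [← isOpen_compl_iff, isOpen_coinduced (f := Quotient.mk s)]
    have : Quotient.mk s ⁻¹' (Quotient.mk s '' C)ᶜ =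
        (Quotient.mk s ⁻¹' (Quotient.mk s '' C))ᶜ := rfl
    rw [this, isOpen_compl_iff]
    exact hsat C hC
  have hT2 : T2Space (Quotient s) := by
    constructor
    intro x y hxy
    obtain ⟨a, rfl⟩ := Quotient.exists_rep x
    obtain ⟨b, rfl⟩ := Quotient.exists_rep y
    -- fibers are disjoint closed sets in a normal space
    set A : Set S := {z | s.r a z} with hAdef
    set B : Set S := {z | s.r b z} with hBdef
    have hA : IsClosed A := hclosed.preimage (Continuous.prodMk_right a)
    have hB : IsClosed B := hclosed.preimage (Continuous.prodMk_right b)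
    have hdisj : Disjoint A B := by
      rw [Set.disjoint_left]
      intro z hz hz'
      exact hxy (Quotient.sound (s.trans hz (s.symm hz')))
    obtain ⟨U, V, hU, hV, hAU, hBV, hUV⟩ := normal_separation hA hB hdisj
    refine ⟨(Quotient.mk s '' Uᶜ)ᶜ, (Quotient.mk s '' Vᶜ)ᶜ, ?_, ?_, ?_, ?_, ?_⟩
    · exact (hclosedmap _ hU.isClosed_compl).isOpen_compl
    · exact (hclosedmap _ hV.isClosed_compl).isOpen_compl
    · rintro ⟨z, hz, hza⟩
      exact hz (hAU (Quotient.exact hza.symm))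
    · rintro ⟨z, hz, hzb⟩
      exact hz (hBV (Quotient.exact hzb.symm))
    · rw [Set.disjoint_left]
      rintro w hw hw'
      obtain ⟨c, rfl⟩ := Quotient.exists_rep w
      have hcU : c ∈ U := by
        by_contra h
        exact hw ⟨c, h, rfl⟩
      have hcV : c ∈ V := by
        by_contra h
        exact hw' ⟨c, h, rfl⟩
      exact Set.disjoint_left.mp hUV hcU hcV
  refine ⟨inferInstance, hT2, ?_⟩
  -- the triple quotient map is a quotient map (compact → Hausdorff surjection)
  have hsurj : Function.Surjective
      (fun p : S × S × S => (Quotient.mk s p.1, Quotient.mk s p.2.1, Quotient.mk s p.2.2)) := by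
    rintro ⟨x, y, z⟩
    obtain ⟨a, rfl⟩ := Quotient.exists_rep x
    obtain ⟨b, rfl⟩ := Quotient.exists_rep y
    obtain ⟨c, rfl⟩ := Quotient.exists_rep z
    exact ⟨(a, b, c), rfl⟩
  have hcont3 : Continuous
      (fun p : S × S × S => (Quotient.mk s p.1, Quotient.mk s p.2.1, Quotient.mk s p.2.2)) :=
    (hπ.comp continuous_fst).prodMk
      ((hπ.comp (continuous_fst.comp continuous_snd)).prodMk
        (hπ.comp (continuous_snd.comp continuous_snd)))
  have hq : Topology.IsQuotientMap
      (fun p : S × S × S => (Quotient.mk s p.1, Quotient.mk s p.2.1, Quotient.mk s p.2.2)) :=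
    Topology.IsQuotientMap.of_surjective_continuous hsurj hcont3
  rw [hq.continuous_iff]
  have : ((fun p : Quotient s × Quotient s × Quotient s => g p.1 p.2.1 p.2.2) ∘
      fun p : S × S × S => (Quotient.mk s p.1, Quotient.mk s p.2.1, Quotient.mk s p.2.2)) =
      fun p : S × S × S => Quotient.mk s (m p.1 p.2.1 p.2.2) := by
    ext ⟨a, b, c⟩
    exact hg a b c
  rw [this]
  exact hπ.comp hm
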